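/- arXiv:1909.09391 — 3 statements merged into one kernel-verified Lean document; each statement's English description precedes it below -/
import Mathlib

section
/- Let k be a field, λ ∈ k with λ ≠ 0 and λ ≠ -1, and let I be the ideal of k[x0,x1,x2,x3] generated by x0 + λ·x1 - x3 and x0 - x1 - x2. If α, β, γ, δ ∈ k satisfy α·x0³ + β·x0²·x3 + γ·x1²·x2 + δ·x1·x2·x3 ∈ I, then α = β = γ = δ = 0. -/
open MvPolynomial

/-- Over any field `k`, for `l ≠ 0, -1`, if `α·x0³ + β·x0²x3 + γ·x1²x2 + δ·x1x2x3` lies in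
the ideal `⟨x0 + l·x1 - x3, x0 - x1 - x2⟩ ⊆ k[x0,x1,x2,x3]`, then `α = β = γ = δ = 0`. -/
theorem cubic_support_3I2_in_degenerate_line_ideal
    {k : Type*} [Field k] (l : k) (hl0 : l ≠ 0) (hl1 : l ≠ -1)
    (I : Ideal (MvPolynomial (Fin 4) k))
    (hI : I = Ideal.span {X 0 + C l * X 1 - X 3, X 0 - X 1 - X 2})
    (α β γ δ : k)
    (h : C α * X 0 ^ 3 + C β * X 0 ^ 2 * X 3 + C γ * X 1 ^ 2 * X 2
        + C δ * X 1 * X 2 * X 3 ∈ I) :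
    α = 0 ∧ β = 0 ∧ γ = 0 ∧ δ = 0 := by
  subst hI
  rw [Ideal.mem_span_pair] at h
  obtain ⟨u, v, huv⟩ := h
  set φ : MvPolynomial (Fin 4) k →ₐ[k] Polynomial k :=
    aeval ![Polynomial.X, 1, Polynomial.X - 1, Polynomial.X + Polynomial.C l] with hφ
  have hq : φ (C α * X 0 ^ 3 + C β * X 0 ^ 2 * X 3 + C γ * X 1 ^ 2 * X 2
      + C δ * X 1 * X 2 * X 3) = 0 := by
    rw [← huv]
    simp only [map_add, map_mul, map_sub, hφ, aeval_X, algHom_C, Polynomial.algebraMap_eq]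
    simp only [Matrix.cons_val_zero, Matrix.cons_val_one, Matrix.head_cons,
      Matrix.cons_val_two, Matrix.tail_cons, Matrix.cons_val_three]
    ring
  simp only [map_add, map_mul, map_pow, hφ, aeval_X, algHom_C] at hq
  simp only [Matrix.cons_val_zero, Matrix.cons_val_one, Matrix.head_cons,
    Matrix.cons_val_two, Matrix.tail_cons, Matrix.cons_val_three,
    Polynomial.algebraMap_eq] at hq
  -- hq : C α * X^3 + C β * X^2 * (X + C l) + C γ * 1^2 * (X - 1)
  --      + C δ * 1 * (X - 1) * (X + C l) = 0
  have hq' : Polynomial.C (α + β) * Polynomial.X ^ 3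
      + Polynomial.C (β * l + δ) * Polynomial.X ^ 2
      + Polynomial.C (γ + δ * (l - 1)) * Polynomial.X
      + Polynomial.C (-(γ + δ * l)) = 0 := by
    simp only [map_add, map_mul, map_sub, map_neg, map_one]
    linear_combination hq
  have h3 := congrArg (fun p => Polynomial.coeff p 3) hq'
  have h2 := congrArg (fun p => Polynomial.coeff p 2) hq'
  have h1 := congrArg (fun p => Polynomial.coeff p 1) hq'
  have h0 := congrArg (fun p => Polynomial.coeff p 0) hq'
  simp only [Polynomial.coeff_add, Polynomial.coeff_C_mul, Polynomial.coeff_X_pow,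
    Polynomial.coeff_X, Polynomial.coeff_C] at h3 h2 h1 h0
  norm_num at h3 h2 h1 h0
  have hδ : δ = 0 := by linear_combination -h1 - h0
  have hγ : γ = 0 := by linear_combination -h0 - l * hδ
  have hβ : β = 0 := by
    rcases mul_eq_zero.mp (show β * l = 0 by linear_combination h2 - hδ) with hb | hb
    · exact hb
    · exact absurd hb hl0
  have hα : α = 0 := by linear_combination h3 - hβ
  exact ⟨hα, hβ, hγ, hδ⟩
end

section
/- Let k be a field of characteristic 2 and I = ⟨x0 - x1 + x3, x1 + x2⟩ ⊆ k[x0,x1,x2,x3]. Then the polynomial x0³ + x0²·x3 + x1·x3² + x1²·x2 lies in I. -/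
open MvPolynomial

/-- If `char k = 2`, then `x0³ + x0²x3 + x1x3² + x1²x2` lies in the ideal
`⟨x0 - x1 + x3, x1 + x2⟩ ⊆ k[x0,x1,x2,x3]`. -/
theorem cubic_3I1_mem_line_ideal_char_two
    {k : Type*} [Field k] [CharP k 2]
    (I : Ideal (MvPolynomial (Fin 4) k))
    (hI : I = Ideal.span {X 0 - X 1 + X 3, X 1 + X 2}) :
    (X 0 ^ 3 + X 0 ^ 2 * X 3 + X 1 * X 3 ^ 2 + X 1 ^ 2 * X 2 : MvPolynomial (Fin 4) k) ∈ I := by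
  subst hI
  rw [Ideal.mem_span_pair]
  refine ⟨X 0 ^ 2 + X 1 * X 0 + X 1 ^ 2 + X 1 * X 3, X 1 ^ 2, ?_⟩
  have h2 : (2 : MvPolynomial (Fin 4) k) = 0 := by
    have := CharP.cast_eq_zero (MvPolynomial (Fin 4) k) 2
    simpa using this
  linear_combination (X 0 * X 1 * X 3 : MvPolynomial (Fin 4) k) * h2
end

section
/- Over any field k, the vector space of homogeneous cubics in the ideal I = ⟨x0 - x1 + x3, x1 + x2⟩ ⊆ k[x0,x1,x2,x3] whose support is contained in {x0³, x0²x3, x1x3², x1²x2} is: zero-dimensional if char(k) ≠ 2, and one-dimensional (spanned by x0³ + x0²x3 + x1x3² + x1²x2) if char(k) = 2. -/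
set_option maxHeartbeats 1000000
set_option maxRecDepth 4000

open MvPolynomial

private lemma key_eqs {k : Type*} [Field k] (α β γ δ : k)
    (hmem : C α * X 0 ^ 3 + C β * X 0 ^ 2 * X 3 + C γ * X 1 * X 3 ^ 2 + C δ * X 1 ^ 2 * X 2 ∈
      Ideal.span {(X 0 - X 1 + X 3 : MvPolynomial (Fin 4) k), X 1 + X 2}) :
    α - δ = 0 ∧ -3 * α + β = 0 ∧ 3 * α - 2 * β + γ = 0 ∧ -α + β = 0 := by
  obtain ⟨p, q, hpq⟩ := Ideal.mem_span_pair.mp hmem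
  set v : Fin 4 → Polynomial (Polynomial k) :=
    ![Polynomial.C Polynomial.X - Polynomial.X, Polynomial.C Polynomial.X,
      -(Polynomial.C Polynomial.X : Polynomial (Polynomial k)), Polynomial.X] with hv
  set φ : MvPolynomial (Fin 4) k →ₐ[k] Polynomial (Polynomial k) := aeval v with hφ
  have h := congrArg φ hpq.symm
  simp only [map_add, map_mul, map_sub, map_neg, map_pow, hφ, hv, aeval_X, aeval_C,
    Matrix.cons_val_zero, Matrix.cons_val_one, Matrix.head_cons, Matrix.cons_val_two,
    Matrix.tail_cons, Matrix.cons_val_three, Matrix.head_fin_const,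
    Polynomial.algebraMap_apply, Algebra.algebraMap_self, RingHom.id_apply, map_zero] at h
  rw [show Polynomial.C Polynomial.X - Polynomial.X - Polynomial.C Polynomial.X + Polynomial.X
      = 0 from by ring,
    show Polynomial.C Polynomial.X + -(Polynomial.C Polynomial.X : Polynomial (Polynomial k)) = 0
      from by ring] at h
  simp only [mul_zero, add_zero, zero_add] at h
  -- h : C (C α) * (C X - X)^3 + ... = 0
  have h0 := congrArg (fun p => Polynomial.coeff p 0) h
  have h1 := congrArg (fun p => Polynomial.coeff p 1) h
  have h2 := congrArg (fun p => Polynomial.coeff p 2) h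
  have h3 := congrArg (fun p => Polynomial.coeff p 3) h
  simp only [pow_succ, pow_zero, one_mul] at h0 h1 h2 h3
  simp [Polynomial.coeff_mul, Finset.Nat.sum_antidiagonal_eq_sum_range_succ_mk,
    Finset.sum_range_succ, Polynomial.coeff_X, Polynomial.coeff_C,
    Polynomial.coeff_one] at h0 h1 h2 h3
  have g0 := congrArg (fun p => Polynomial.coeff p 3) h0
  have g1 := congrArg (fun p => Polynomial.coeff p 2) h1
  have g2 := congrArg (fun p => Polynomial.coeff p 1) h2
  have g3 := congrArg (fun p => Polynomial.coeff p 0) h3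
  simp [Polynomial.coeff_mul, Finset.Nat.sum_antidiagonal_eq_sum_range_succ_mk,
    Finset.sum_range_succ, Polynomial.coeff_X, Polynomial.coeff_C,
    Polynomial.coeff_one] at g0 g1 g2 g3
  refine ⟨by linear_combination g0, by linear_combination g1, by linear_combination g2,
    by linear_combination g3⟩

/-- Over a field `k`, the space of cubics in the ideal `I = ⟨x0 - x1 + x3, x1 + x2⟩`
with support contained in `{x0³, x0²x3, x1x3², x1²x2}` (i.e. of the form
`α·x0³ + β·x0²x3 + γ·x1x3² + δ·x1²x2`) is zero if `char k ≠ 2`, and is the line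
spanned by `x0³ + x0²x3 + x1x3² + x1²x2` (i.e. `α = β = γ = δ`) if `char k = 2`. -/
theorem cubics_supported_on_3I1_in_line_ideal
    {k : Type*} [Field k]
    (I : Ideal (MvPolynomial (Fin 4) k))
    (hI : I = Ideal.span {X 0 - X 1 + X 3, X 1 + X 2}) :
    (ringChar k ≠ 2 → ∀ α β γ δ : k,
      C α * X 0 ^ 3 + C β * X 0 ^ 2 * X 3 + C γ * X 1 * X 3 ^ 2 + C δ * X 1 ^ 2 * X 2 ∈ I →
        α = 0 ∧ β = 0 ∧ γ = 0 ∧ δ = 0) ∧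
    (ringChar k = 2 → ∀ α β γ δ : k,
      (C α * X 0 ^ 3 + C β * X 0 ^ 2 * X 3 + C γ * X 1 * X 3 ^ 2 + C δ * X 1 ^ 2 * X 2 ∈ I ↔
        ∃ c : k, α = c ∧ β = c ∧ γ = c ∧ δ = c)) := by
  subst hI
  constructor
  · intro hchar α β γ δ hmem
    obtain ⟨e0, e1, e2, e3⟩ := key_eqs α β γ δ hmem
    have h2 : (2 : k) ≠ 0 := Ring.two_ne_zero hchar
    have hα : α = 0 := by
      have : 2 * α = 0 := by linear_combination e3 - e1
      exact (mul_eq_zero.mp this).resolve_left h2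
    have hβ : β = 0 := by linear_combination e3 + hα
    exact ⟨hα, hβ, by linear_combination e2 - 3*hα + 2*hβ, by linear_combination -e0 + hα⟩
  · intro hchar α β γ δ
    have h2 : (2 : k) = 0 := by
      have := ringChar.Nat.cast_ringChar (R := k)
      rw [hchar] at this; exact_mod_cast this
    constructor
    · intro hmem
      obtain ⟨e0, e1, e2, e3⟩ := key_eqs α β γ δ hmem
      exact ⟨α, rfl, by linear_combination e3, by linear_combination e2 + 2*e3 - α * h2,
        by linear_combination -e0⟩
    · rintro ⟨c, rfl, rfl, rfl, rfl⟩
      refine Ideal.mem_span_pair.mpr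
        ⟨C δ * (X 0 ^ 2 + X 0 * (X 1 - X 3) + (X 1 - X 3) ^ 2 + (X 0 + (X 1 - X 3)) * X 3),
         C δ * X 1 ^ 2, ?_⟩
      have hC2 : (2 : MvPolynomial (Fin 4) k) = 0 := by
        have h' : (C (2:k) : MvPolynomial (Fin 4) k) = 0 := by rw [h2, map_zero]
        rw [map_ofNat] at h'
        exact h'
      linear_combination (C δ * (X 1 ^ 2 * X 3 - X 1 * X 3 ^ 2)) * hC2
end
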